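/- Let d be a fundamental discriminant with d > 1 (so d is squarefree or d/4 is squarefree, d ≡ 0 or 1 mod 4). Then the quadratic forms Q = [c, d, 0] (i.e., Q(x,y) = cx² + dxy) with 0 ≤ c < d, of discriminant d², form a complete set of representatives for the action of PSL₂(ℤ) on integral binary quadratic forms of discriminant d². That is, every integral binary quadratic form [a,b,c'] with b² − 4ac' = d² is PSL₂(ℤ)-equivalent to exactly one form [c, d, 0] with 0 ≤ c < d. -/

import Mathlib

/-- An integral binary quadratic form `[a,b,c]`, i.e. `Q(x,y) = a x² + b x y + c y²`. -/
structure BQF where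
  a : ℤ
  b : ℤ
  c : ℤ

/-- The discriminant `b² - 4ac` of a binary quadratic form. -/
def BQF.disc (Q : BQF) : ℤ := Q.b ^ 2 - 4 * Q.a * Q.c

/-- The substitution action of `SL₂(ℤ)` (factoring through `PSL₂(ℤ)`) on binary
quadratic forms: `(γ·Q)(x,y) = Q((x,y)·γ)`. -/
def BQF.act (γ : Matrix.SpecialLinearGroup (Fin 2) ℤ) (Q : BQF) : BQF :=
  { a := Q.a * (γ.1 0 0) ^ 2 + Q.b * (γ.1 0 0) * (γ.1 1 0) + Q.c * (γ.1 1 0) ^ 2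
    b := 2 * Q.a * (γ.1 0 0) * (γ.1 0 1) + Q.b * ((γ.1 0 0) * (γ.1 1 1) + (γ.1 0 1) * (γ.1 1 0))
          + 2 * Q.c * (γ.1 1 0) * (γ.1 1 1)
    c := Q.a * (γ.1 0 1) ^ 2 + Q.b * (γ.1 0 1) * (γ.1 1 1) + Q.c * (γ.1 1 1) ^ 2 }

/-- `d` is a fundamental discriminant: either `d ≡ 1 (mod 4)` and squarefree, or
`d = 4m` with `m` squarefree and `m ≡ 2, 3 (mod 4)`. -/
def IsFundamentalDiscriminant (d : ℤ) : Prop :=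
  (d % 4 = 1 ∧ Squarefree d) ∨
    (d % 4 = 0 ∧ Squarefree (d / 4) ∧ ((d / 4) % 4 = 2 ∨ (d / 4) % 4 = 3))

def BQF.mkSL (p q r s : ℤ) (h : p * s - q * r = 1) : Matrix.SpecialLinearGroup (Fin 2) ℤ :=
  ⟨!![p, q; r, s], by simp [Matrix.det_fin_two_of]; linarith⟩

lemma BQF.act_mkSL (p q r s : ℤ) (h : p * s - q * r = 1) (Q : BQF) :
    BQF.act (BQF.mkSL p q r s h) Q =
      ⟨Q.a * p ^ 2 + Q.b * p * r + Q.c * r ^ 2,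
       2 * Q.a * p * q + Q.b * (p * s + q * r) + 2 * Q.c * r * s,
       Q.a * q ^ 2 + Q.b * q * s + Q.c * s ^ 2⟩ := by
  simp [BQF.act, BQF.mkSL]

lemma BQF.act_act (γ δ : Matrix.SpecialLinearGroup (Fin 2) ℤ) (Q : BQF) :
    BQF.act δ (BQF.act γ Q) = BQF.act (γ * δ) Q := by
  simp only [BQF.act, Matrix.SpecialLinearGroup.coe_mul, Matrix.mul_apply, Fin.sum_univ_two]
  rw [BQF.mk.injEq]
  refine ⟨by ring, by ring, by ring⟩

lemma BQF.disc_act (γ : Matrix.SpecialLinearGroup (Fin 2) ℤ) (Q : BQF) :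
    (BQF.act γ Q).disc = Q.disc := by
  have hdet : γ.1 0 0 * γ.1 1 1 - γ.1 0 1 * γ.1 1 0 = 1 := by
    have := γ.2
    rw [Matrix.det_fin_two] at this
    linarith
  simp only [BQF.disc, BQF.act]
  linear_combination (Q.b ^ 2 - 4 * Q.a * Q.c) * (γ.1 0 0 * γ.1 1 1 - γ.1 0 1 * γ.1 1 0 + 1) * hdet

lemma BQF.equiv_trans {Q R S : BQF} (h1 : ∃ γ, BQF.act γ Q = R) (h2 : ∃ γ, BQF.act γ R = S) :
    ∃ γ, BQF.act γ Q = S := by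
  obtain ⟨γ, rfl⟩ := h1
  obtain ⟨δ, rfl⟩ := h2
  exact ⟨γ * δ, (BQF.act_act γ δ Q).symm⟩

/-- Step A : a form with nonzero leading coefficient and square discriminant is
equivalent to one with leading coefficient zero. -/
lemma stepA (d : ℤ) (Q : BQF) (ha : Q.a ≠ 0) (hQ : Q.b ^ 2 - 4 * Q.a * Q.c = d ^ 2) :
    ∃ b1 c1 γ, BQF.act γ Q = ⟨0, b1, c1⟩ := by
  have h2 : (2 : ℤ) ∣ d - Q.b := by
    have hdvd : (2 : ℤ) ∣ (Q.b - d) * (Q.b + d) := ⟨2 * (Q.a * Q.c), by linear_combination hQ⟩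
    have hdvd' : ((2 : ℕ) : ℤ) ∣ (Q.b - d) * (Q.b + d) := by exact_mod_cast hdvd
    rcases (Int.Prime.dvd_mul' Nat.prime_two hdvd') with h | h <;>
      · have h' : (2 : ℤ) ∣ _ := h
        omega
  obtain ⟨x0, hx0⟩ := h2
  have key : x0 ^ 2 + Q.b * x0 + Q.a * Q.c = 0 := by
    have h4 : 4 * (x0 ^ 2 + Q.b * x0 + Q.a * Q.c) = 0 := by
      linear_combination (-(2 * x0 + Q.b + d)) * hx0 - hQ
    linarith
  set g : ℤ := (Int.gcd x0 Q.a : ℤ) with hgdef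
  have hgnat : Int.gcd x0 Q.a ≠ 0 := fun h => ha (Int.gcd_eq_zero_iff.mp h).2
  have hg0 : g ≠ 0 := by rw [hgdef]; exact_mod_cast hgnat
  obtain ⟨p, hp⟩ := (Int.gcd_dvd_left x0 Q.a : g ∣ x0)
  obtain ⟨r, hr⟩ := (Int.gcd_dvd_right x0 Q.a : g ∣ Q.a)
  have hp' : x0 / g = p := by rw [hp]; exact Int.mul_ediv_cancel_left _ hg0
  have hr' : Q.a / g = r := by rw [hr]; exact Int.mul_ediv_cancel_left _ hg0
  have hcop : IsCoprime p r := by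
    rw [Int.isCoprime_iff_gcd_eq_one, ← hp', ← hr']
    exact Int.gcd_div_gcd_div_gcd (Nat.pos_of_ne_zero hgnat)
  obtain ⟨u, v, huv⟩ := hcop
  have hdet : p * u - (-v) * r = 1 := by linarith
  refine ⟨2 * Q.a * p * (-v) + Q.b * (p * u + (-v) * r) + 2 * Q.c * r * u,
    Q.a * (-v) ^ 2 + Q.b * (-v) * u + Q.c * u ^ 2, BQF.mkSL p (-v) r u hdet, ?_⟩
  rw [BQF.act_mkSL, BQF.mk.injEq]
  refine ⟨?_, rfl, rfl⟩
  have hz : (g * g) * (Q.a * p ^ 2 + Q.b * p * r + Q.c * r ^ 2) = 0 := by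
    linear_combination Q.a * key + (-(Q.a * (x0 + g * p)) - Q.b * g * r) * hp +
      (-(Q.b * x0) - Q.c * (Q.a + g * r)) * hr
  exact (mul_eq_zero.mp hz).resolve_left (mul_ne_zero hg0 hg0)

/-- Step B : a form `[0, b1, c1]` with `b1² = d²`, `d > 0`, is equivalent to some `[c, d, 0]`. -/
lemma stepB (d : ℤ) (hd : 0 < d) (b1 c1 : ℤ) (hb : b1 ^ 2 = d ^ 2) :
    ∃ c γ, BQF.act γ (⟨0, b1, c1⟩ : BQF) = ⟨c, d, 0⟩ := by
  have hb' : b1 = d ∨ b1 = -d := by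
    have h0 : (b1 - d) * (b1 + d) = 0 := by linear_combination hb
    rcases mul_eq_zero.mp h0 with h | h
    · left; linarith
    · right; linarith
  rcases hb' with h | h
  all_goals rw [h]; clear hb h b1
  · -- b1 = d : Bezout construction
    set g : ℤ := (Int.gcd d c1 : ℤ) with hgdef
    have hgnat : Int.gcd d c1 ≠ 0 := by
      intro h
      have := (Int.gcd_eq_zero_iff.mp h).1
      omega
    have hg0 : g ≠ 0 := by rw [hgdef]; exact_mod_cast hgnat
    obtain ⟨e, he⟩ := (Int.gcd_dvd_left d c1 : g ∣ d)
    obtain ⟨f, hf⟩ := (Int.gcd_dvd_right d c1 : g ∣ c1)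
    have he' : d / g = e := by rw [he]; exact Int.mul_ediv_cancel_left _ hg0
    have hf' : c1 / g = f := by rw [hf]; exact Int.mul_ediv_cancel_left _ hg0
    have hcop : IsCoprime e f := by
      rw [Int.isCoprime_iff_gcd_eq_one, ← he', ← hf']
      exact Int.gcd_div_gcd_div_gcd (Nat.pos_of_ne_zero hgnat)
    obtain ⟨u, v, huv⟩ := hcop
    have hdet : u * e - (-f) * v = 1 := by linarith
    refine ⟨0 * u ^ 2 + d * u * v + c1 * v ^ 2, BQF.mkSL u (-f) v e hdet, ?_⟩
    rw [BQF.act_mkSL, BQF.mk.injEq]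
    refine ⟨rfl, ?_, ?_⟩
    · linear_combination (u * e - f * v - 1) * he + (2 * v * e) * hf + (g * e) * huv
    · linear_combination (-(f * e)) * he + (e ^ 2) * hf
  · -- b1 = -d : rotate
    have hdet : (0 : ℤ) * 0 - (-1) * 1 = 1 := by ring
    refine ⟨c1, BQF.mkSL 0 (-1) 1 0 hdet, ?_⟩
    rw [BQF.act_mkSL, BQF.mk.injEq]
    refine ⟨by ring, by ring, by ring⟩

/-- Shift step : `[a, d, 0]` is equivalent to `[a % d, d, 0]`. -/
lemma stepC (a d : ℤ) : ∃ γ, BQF.act γ (⟨a, d, 0⟩ : BQF) = ⟨a % d, d, 0⟩ := by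
  have hdet : (1 : ℤ) * 1 - 0 * (-(a / d)) = 1 := by ring
  refine ⟨BQF.mkSL 1 0 (-(a / d)) 1 hdet, ?_⟩
  rw [BQF.act_mkSL, BQF.mk.injEq]
  refine ⟨?_, by ring, by ring⟩
  rw [Int.emod_def]; ring

/-- Uniqueness : two equivalent reduced representatives coincide. -/
lemma uniq (d : ℤ) (hd1 : 1 < d) (c1 c2 : ℤ) (h1 : 0 ≤ c1) (h2 : c1 < d)
    (h3 : 0 ≤ c2) (h4 : c2 < d) (γ : Matrix.SpecialLinearGroup (Fin 2) ℤ)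
    (h : BQF.act γ (⟨c1, d, 0⟩ : BQF) = ⟨c2, d, 0⟩) : c1 = c2 := by
  set p := γ.1 0 0
  set q := γ.1 0 1
  set r := γ.1 1 0
  set s := γ.1 1 1
  have hdet : p * s - q * r = 1 := by
    have := γ.2
    rw [Matrix.det_fin_two] at this
    linarith
  rw [BQF.act, BQF.mk.injEq] at h
  obtain ⟨e1, e2, e3⟩ := h
  have e3' : q * (c1 * q + d * s) = 0 := by linear_combination e3
  rcases mul_eq_zero.mp e3' with hq | hcs
  · -- q = 0
    have hps : p * s = 1 := by rw [hq] at hdet; linarith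
    have hp2 : p ^ 2 = 1 := by
      rcases Int.mul_eq_one_iff_eq_one_or_neg_one.mp hps with ⟨hp, _⟩ | ⟨hp, _⟩ <;>
        rw [hp] <;> ring
    have hk : c2 - c1 = d * (p * r) := by linear_combination -e1 + c1 * hp2
    rcases lt_trichotomy (p * r) 0 with hk0 | hk0 | hk0
    · nlinarith
    · rw [hk0, mul_zero] at hk; linarith
    · nlinarith
  · -- c1 * q + d * s = 0 : contradiction
    exfalso
    have h2d : d * 2 = 0 := by linear_combination -e2 + (2 * p) * hcs - d * hdet
    omega

theorem representatives_of_square_discriminant'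
    (d : ℤ) (hd1 : 1 < d)
    (Q : BQF) (hQ : Q.disc = d ^ 2) :
    ∃! c : ℤ, (0 ≤ c ∧ c < d) ∧
      ∃ γ : Matrix.SpecialLinearGroup (Fin 2) ℤ, BQF.act γ Q = ⟨c, d, 0⟩ := by
  have hd0 : 0 < d := by linarith
  rw [BQF.disc] at hQ
  -- Existence of some representative [c0, d, 0]
  have hex : ∃ c0, ∃ γ, BQF.act γ Q = (⟨c0, d, 0⟩ : BQF) := by
    by_cases ha : Q.a = 0
    · have hb2 : Q.b ^ 2 = d ^ 2 := by rw [ha] at hQ; linarith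
      obtain ⟨c0, γ, hγ⟩ := stepB d hd0 Q.b Q.c hb2
      refine ⟨c0, γ, ?_⟩
      have : Q = (⟨0, Q.b, Q.c⟩ : BQF) := by
        obtain ⟨a, b, c⟩ := Q
        simp_all
      rw [this]
      exact hγ
    · obtain ⟨b1, c1, γ1, hγ1⟩ := stepA d Q ha hQ
      have hdisc : (BQF.act γ1 Q).disc = d ^ 2 := by
        rw [BQF.disc_act, BQF.disc]
        linear_combination hQ
      rw [hγ1] at hdisc
      have hb2 : b1 ^ 2 = d ^ 2 := by
        rw [BQF.disc] at hdisc
        simp only at hdisc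
        linarith
      obtain ⟨c0, γ2, hγ2⟩ := stepB d hd0 b1 c1 hb2
      exact ⟨c0, BQF.equiv_trans ⟨γ1, hγ1⟩ ⟨γ2, hγ2⟩⟩
  obtain ⟨c0, hγ⟩ := hex
  refine ⟨c0 % d, ⟨⟨Int.emod_nonneg c0 (by omega), Int.emod_lt_of_pos c0 hd0⟩,
    BQF.equiv_trans hγ (stepC c0 d)⟩, ?_⟩
  rintro y ⟨⟨hy0, hy1⟩, γy, hγy⟩
  -- y and c0 % d are both representatives; produce a matrix between them
  obtain ⟨γc, hγc⟩ := BQF.equiv_trans hγ (stepC c0 d)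
  have : BQF.act (γy⁻¹ * γc) (⟨y, d, 0⟩ : BQF) = ⟨c0 % d, d, 0⟩ := by
    rw [← hγy, BQF.act_act, mul_inv_cancel_left, hγc]
  exact uniq d hd1 y (c0 % d) hy0 hy1 (Int.emod_nonneg c0 (by omega))
    (Int.emod_lt_of_pos c0 hd0) _ this


/-- For a fundamental discriminant `d > 1`, the forms `[c, d, 0]` with `0 ≤ c < d` are a
complete set of representatives for `PSL₂(ℤ)\𝒬_{d²}`: every form of discriminant `d²`
is equivalent to exactly one of them. -/
theorem representatives_of_square_discriminant
    (d : ℤ) (hd : IsFundamentalDiscriminant d) (hd1 : 1 < d)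
    (Q : BQF) (hQ : Q.disc = d ^ 2) :
    ∃! c : ℤ, (0 ≤ c ∧ c < d) ∧
      ∃ γ : Matrix.SpecialLinearGroup (Fin 2) ℤ, BQF.act γ Q = ⟨c, d, 0⟩ :=
  representatives_of_square_discriminant' d hd1 Q hQ
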